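/- Let n ≥ 1, ω = exp(2π√−1/n), let s_0, …, s_{n−1} ∈ ℂ be pairwise distinct, and let f ∈ ℂ, f ≠ 0, satisfy s_i^n ≠ f^n for all i. Then the n×n CV matrix C_{s,f} = (1/(s_i − fω^j))_{i,j=0}^{n−1} and the n×n Vandermonde matrix V_s are both invertible, and V_s^{−1} = √n · diag(f^{−j})_{j=0}^{n−1} · Ω^H · diag(ω^{−j})_{j=0}^{n−1} · C_{s,f}^{−1} · diag(f^{n−1}/(s_i^n − f^n))_{i=0}^{n−1}, where Ω^H = n^{−1/2}(ω^{−ij})_{i,j=0}^{n−1}. -/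

import Mathlib

open Matrix Finset

/-- Equation (3.5) of the paper: the inverse of the `n × n` Vandermonde matrix
`V_s` is expressed through the inverse of the CV matrix
`C_{s,f} = (1/(s_i - f ω^j))` and the inverse DFT matrix `Ω^H = n^{-1/2}(ω^{-ij})`:
`V_s⁻¹ = √n · diag(f^{-j}) · Ω^H · diag(ω^{-j}) · C_{s,f}⁻¹ · diag(f^{n-1}/(s_i^n - f^n))`. -/
theorem vandermonde_inv_eq_cv_inv_factorization (n : ℕ) (hn : 1 ≤ n)
    (ω : ℂ) (hω : ω = Complex.exp (2 * Real.pi * Complex.I / n))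
    (s : Fin n → ℂ) (hs : Function.Injective s)
    (f : ℂ) (hf : f ≠ 0) (hsf : ∀ i, s i ^ n ≠ f ^ n) :
    IsUnit (Matrix.of fun (i j : Fin n) => (s i - f * ω ^ (j : ℕ))⁻¹) ∧
      IsUnit (Matrix.vandermonde s) ∧
      (Matrix.vandermonde s)⁻¹ =
        (Real.sqrt n : ℂ) •
          (Matrix.diagonal (fun j : Fin n => f ^ (-(j : ℕ) : ℤ)) *
            (Matrix.of fun (i j : Fin n) =>
              ω ^ (-((i : ℕ) * (j : ℕ)) : ℤ) / (Real.sqrt n : ℂ)) *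
            Matrix.diagonal (fun j : Fin n => ω ^ (-(j : ℕ) : ℤ)) *
            (Matrix.of fun (i j : Fin n) => (s i - f * ω ^ (j : ℕ))⁻¹)⁻¹ *
            Matrix.diagonal (fun i : Fin n => f ^ (n - 1) / (s i ^ n - f ^ n))) := by
  have hn0 : n ≠ 0 := by omega
  have hprim : IsPrimitiveRoot ω n := hω ▸ Complex.isPrimitiveRoot_exp n hn0
  have hω1 : ω ^ n = 1 := hprim.pow_eq_one
  have hω0 : ω ≠ 0 := fun h => by simp [h, zero_pow hn0] at hω1
  have hsf' : ∀ i, s i ^ n - f ^ n ≠ 0 := fun i => sub_ne_zero.mpr (hsf i)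
  have hy : ∀ (i j : Fin n), s i - f * ω ^ (j : ℕ) ≠ 0 := by
    intro i j h
    apply hsf i
    rw [sub_eq_zero.mp h, mul_pow, ← pow_mul, mul_comm (j : ℕ) n, pow_mul, hω1, one_pow, mul_one]
  set C : Matrix (Fin n) (Fin n) ℂ :=
    Matrix.of fun (i j : Fin n) => (s i - f * ω ^ (j : ℕ))⁻¹ with hC
  set V := Matrix.vandermonde s with hV
  set F : Matrix (Fin n) (Fin n) ℂ := Matrix.vandermonde (fun k : Fin n => ω⁻¹ ^ (k : ℕ)) with hF
  set D2 : Matrix (Fin n) (Fin n) ℂ := Matrix.diagonal (fun j : Fin n => ω ^ (-(j : ℕ) : ℤ)) with hD2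
  set D1 : Matrix (Fin n) (Fin n) ℂ := Matrix.diagonal (fun j : Fin n => f ^ (-(j : ℕ) : ℤ)) with hD1
  set D3 : Matrix (Fin n) (Fin n) ℂ :=
    Matrix.diagonal (fun i : Fin n => f ^ (n - 1) / (s i ^ n - f ^ n)) with hD3
  set B : Matrix (Fin n) (Fin n) ℂ := D1 * F * D2 with hB
  -- key factorization
  have hpowω : ∀ a b : Fin n, ω ^ (-((a : ℕ) * (b : ℕ)) : ℤ) = (ω ^ ((a : ℕ) * (b : ℕ)))⁻¹ := by
    intro a b
    rw [_root_.zpow_neg]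
    norm_cast
  have key : C = D3 * V * B := by
    ext i j
    have hyn : (f * ω ^ (j : ℕ)) ^ n = f ^ n := by
      rw [mul_pow, ← pow_mul, mul_comm (j : ℕ) n, pow_mul, hω1, one_pow, mul_one]
    have hgeom : (∑ k ∈ Finset.range n, s i ^ k * (f * ω ^ (j : ℕ)) ^ (n - 1 - k)) *
        (s i - f * ω ^ (j : ℕ)) = s i ^ n - f ^ n := by
      rw [geom_sum₂_mul, hyn]
    have hterm : ∀ k : Fin n,
        f ^ (n - 1) * ((f ^ (-(k : ℕ) : ℤ)) * (ω ^ (-((k : ℕ) * (j : ℕ)) : ℤ) * ω ^ (-(j : ℕ) : ℤ)))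
          = (f * ω ^ (j : ℕ)) ^ (n - 1 - (k : ℕ)) := by
      intro k
      have hk : (k : ℕ) < n := k.isLt
      have hfp : f ^ (n - 1) = f ^ (n - 1 - (k : ℕ)) * f ^ (k : ℕ) := by
        rw [← pow_add]; congr 1; omega
      have hωe : ω ^ ((k : ℕ) * (j : ℕ) + (j : ℕ)) * ω ^ ((j : ℕ) * (n - 1 - (k : ℕ))) = 1 := by
        rw [← pow_add]
        have h1 : (k : ℕ) * (j : ℕ) + (j : ℕ) + (j : ℕ) * (n - 1 - (k : ℕ))
            = (j : ℕ) * ((n - 1 - (k : ℕ)) + (k : ℕ) + 1) := by ring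
        have h2 : (n - 1 - (k : ℕ)) + (k : ℕ) + 1 = n := by omega
        rw [h1, h2, mul_comm, pow_mul, hω1, one_pow]
      rw [hpowω k j, _root_.zpow_neg, _root_.zpow_neg, zpow_natCast, zpow_natCast,
        mul_pow, ← pow_mul, ← mul_inv, ← pow_add, inv_eq_of_mul_eq_one_right hωe, hfp]
      field_simp
    have hbij : ∀ k : Fin n, (D3 * V) i k * B k j
        = (s i ^ n - f ^ n)⁻¹ * (s i ^ (k : ℕ) * (f * ω ^ (j : ℕ)) ^ (n - 1 - (k : ℕ))) := by
      intro k
      have h1 : (D3 * V) i k = f ^ (n - 1) / (s i ^ n - f ^ n) * s i ^ (k : ℕ) := by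
        simp [hD3, hV, Matrix.diagonal_mul, Matrix.vandermonde_apply]
      have hFkj : F k j = ω ^ (-((k : ℕ) * (j : ℕ)) : ℤ) := by
        rw [hF, Matrix.vandermonde_apply, ← pow_mul, inv_pow, hpowω k j]
      have h2 : B k j = f ^ (-(k : ℕ) : ℤ) * (ω ^ (-((k : ℕ) * (j : ℕ)) : ℤ) * ω ^ (-(j : ℕ) : ℤ)) := by
        rw [hB, Matrix.mul_diagonal, Matrix.diagonal_mul, hFkj, mul_assoc]
      rw [h1, h2, ← hterm k, div_eq_mul_inv]
      ring
    show C i j = ∑ k, (D3 * V) i k * B k j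
    rw [Finset.sum_congr rfl (fun k _ => hbij k), ← Finset.mul_sum,
      Fin.sum_univ_eq_sum_range (fun k => s i ^ k * (f * ω ^ (j : ℕ)) ^ (n - 1 - k))]
    have hsum : (∑ k ∈ Finset.range n, s i ^ k * (f * ω ^ (j : ℕ)) ^ (n - 1 - k))
        = (s i ^ n - f ^ n) * (s i - f * ω ^ (j : ℕ))⁻¹ := by
      rw [eq_mul_inv_iff_mul_eq₀ (hy i j)]; exact hgeom
    rw [hsum, ← mul_assoc, inv_mul_cancel₀ (hsf' i), one_mul]
    rfl
  -- invertibility of the factors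
  have hdV : IsUnit V.det :=
    isUnit_iff_ne_zero.mpr (Matrix.det_vandermonde_ne_zero_iff.mpr hs)
  have hinjF : Function.Injective (fun k : Fin n => ω⁻¹ ^ (k : ℕ)) := by
    intro a b h
    exact Fin.ext (hprim.inv.pow_inj a.isLt b.isLt h)
  have hdF : IsUnit F.det :=
    isUnit_iff_ne_zero.mpr (Matrix.det_vandermonde_ne_zero_iff.mpr hinjF)
  have hdD1 : IsUnit D1.det := by
    rw [hD1, Matrix.det_diagonal]
    exact isUnit_iff_ne_zero.mpr (Finset.prod_ne_zero_iff.mpr fun k _ => zpow_ne_zero _ hf)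
  have hdD2 : IsUnit D2.det := by
    rw [hD2, Matrix.det_diagonal]
    exact isUnit_iff_ne_zero.mpr (Finset.prod_ne_zero_iff.mpr fun k _ => zpow_ne_zero _ hω0)
  have hdD3 : IsUnit D3.det := by
    rw [hD3, Matrix.det_diagonal]
    exact isUnit_iff_ne_zero.mpr (Finset.prod_ne_zero_iff.mpr fun k _ =>
      div_ne_zero (pow_ne_zero _ hf) (hsf' k))
  have hdB : IsUnit B.det := by
    rw [hB, Matrix.det_mul, Matrix.det_mul]
    exact (hdD1.mul hdF).mul hdD2
  have hdC : IsUnit C.det := by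
    rw [key, Matrix.det_mul, Matrix.det_mul]
    exact (hdD3.mul hdV).mul hdB
  refine ⟨(Matrix.isUnit_iff_isUnit_det C).mpr hdC, (Matrix.isUnit_iff_isUnit_det V).mpr hdV, ?_⟩
  -- the inverse formula
  have hAV : D3 * V = C * B⁻¹ := by
    rw [key, Matrix.mul_assoc, Matrix.mul_nonsing_inv _ hdB, Matrix.mul_one]
  have hleft : (B * C⁻¹ * D3) * V = 1 := by
    rw [Matrix.mul_assoc (B * C⁻¹) D3 V, hAV, ← Matrix.mul_assoc (B * C⁻¹) C B⁻¹,
      Matrix.mul_assoc B C⁻¹ C, Matrix.nonsing_inv_mul _ hdC, Matrix.mul_one,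
      Matrix.mul_nonsing_inv _ hdB]
  have hVinv : V⁻¹ = B * C⁻¹ * D3 := Matrix.inv_eq_left_inv hleft
  have hsq : (Real.sqrt n : ℂ) ≠ 0 := by
    simp only [ne_eq, Complex.ofReal_eq_zero]
    positivity
  have hF' : (Matrix.of fun (i j : Fin n) => ω ^ (-((i : ℕ) * (j : ℕ)) : ℤ) / (Real.sqrt n : ℂ))
      = ((Real.sqrt n : ℂ))⁻¹ • F := by
    ext i j
    rw [Matrix.of_apply, Matrix.smul_apply, hF, Matrix.vandermonde_apply, ← pow_mul, inv_pow,
      ← hpowω i j, div_eq_inv_mul, smul_eq_mul]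
  rw [hVinv, hF', Matrix.mul_smul, Matrix.smul_mul, Matrix.smul_mul, Matrix.smul_mul, smul_smul,
    mul_inv_cancel₀ hsq, one_smul, hB]
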